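/- For {i, j} ⊂ {1, 2, 3} with i < j, let ι_{ij} : O(2) → SO(3) denote the block embedding which places A ∈ O(2) in the rows and columns i, j and places det A in the remaining diagonal entry. Then for any two distinct such pairs {i, j} ≠ {i', j'}, the subgroup of SO(3) generated by the images of ι_{ij} and ι_{i'j'} is all of SO(3). -/

import Mathlib

open Matrix

/-- The block embedding `O(2) → SO(3)` placing `A ∈ O(2)` in the rows and columns `i, j`
and `det A` in the remaining diagonal entry. -/
def blockEmbed (i j : Fin 3) (A : Matrix (Fin 2) (Fin 2) ℝ) : Matrix (Fin 3) (Fin 3) ℝ :=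
  fun r s =>
    if r = i then (if s = i then A 0 0 else if s = j then A 0 1 else 0)
    else if r = j then (if s = i then A 1 0 else if s = j then A 1 1 else 0)
    else if s = r then A.det else 0

lemma detA_sq {A : Matrix (Fin 2) (Fin 2) ℝ} (h : Aᵀ * A = 1) : A.det * A.det = 1 := by
  have := congrArg Matrix.det h
  rwa [Matrix.det_mul, Matrix.det_transpose, Matrix.det_one] at this

lemma blockEmbed_det (i j : Fin 3) (hij : i < j) (A : Matrix (Fin 2) (Fin 2) ℝ) :
    (blockEmbed i j A).det = A.det * A.det := by
  fin_cases i <;> fin_cases j <;>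
    first
      | exact absurd hij (by decide)
      | (simp [blockEmbed, Matrix.det_fin_three, Matrix.det_fin_two]; ring)

lemma transpose_rot2 (x y : ℝ) : (!![x, -y; y, x])ᵀ = !![x, y; -y, x] := by
  ext r s; fin_cases r <;> fin_cases s <;> rfl

lemma rot2_orth (x y : ℝ) (h : x^2 + y^2 = 1) :
    (!![x, -y; y, x])ᵀ * !![x, -y; y, x] = 1 := by
  rw [transpose_rot2]
  ext r s
  fin_cases r <;> fin_cases s <;>
    simp [Matrix.mul_apply, Fin.sum_univ_two, Matrix.one_apply] <;> nlinarith [h]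

lemma rot_mem (i j : Fin 3) (hij : i < j) (x y : ℝ) (h : x^2 + y^2 = 1) :
    blockEmbed i j !![x, -y; y, x] ∈ Matrix.orthogonalGroup (Fin 3) ℝ := by
  rw [Matrix.mem_orthogonalGroup_iff']
  fin_cases i <;> fin_cases j <;>
    first
      | exact absurd hij (by decide)
      | (ext r s; fin_cases r <;> fin_cases s <;>
          simp [blockEmbed, Matrix.mul_apply, Fin.sum_univ_three, Matrix.one_apply,
            Matrix.det_fin_two_of] <;> nlinarith [h])


lemma fix2 (m : Matrix (Fin 3) (Fin 3) ℝ) (horth : mᵀ * m = 1) (hdet : m.det = 1)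
    (h0 : m 0 2 = 0) (h1 : m 1 2 = 0) (h2 : m 2 2 = 1) :
    ∃ x y : ℝ, x^2 + y^2 = 1 ∧ m = blockEmbed 0 1 !![x, -y; y, x] := by
  have e : ∀ r s : Fin 3, m 0 r * m 0 s + m 1 r * m 1 s + m 2 r * m 2 s
      = if r = s then 1 else 0 := by
    intro r s
    have := congrFun (congrFun horth r) s
    simpa [Matrix.mul_apply, Fin.sum_univ_three, Matrix.one_apply, add_assoc] using this
  have e20 : m 2 0 = 0 := by have := e 2 0; simpa [h0, h1, h2] using this
  have e21 : m 2 1 = 0 := by have := e 2 1; simpa [h0, h1, h2] using this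
  have e00 := e 0 0; have e01 := e 0 1; have e11 := e 1 1
  simp [h0, h1, h2, e20, e21] at e00 e01 e11
  rw [Matrix.det_fin_three] at hdet
  simp [h0, h1, h2, e20, e21] at hdet
  refine ⟨m 0 0, m 1 0, by nlinarith [e00], ?_⟩
  have hd : m 1 1 = m 0 0 := by
    nlinarith [e00, e01, e11, hdet, sq_nonneg (m 1 1 - m 0 0), sq_nonneg (m 0 1 + m 1 0)]
  have hb : m 0 1 = -(m 1 0) := by
    nlinarith [e00, e01, e11, hdet, sq_nonneg (m 1 1 - m 0 0), sq_nonneg (m 0 1 + m 1 0)]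
  ext r s
  fin_cases r <;> fin_cases s <;>
    simp [blockEmbed, Matrix.det_fin_two_of, h0, h1, h2, e20, e21, hd, hb] <;>
    nlinarith [e00]

noncomputable section

def S (i j : Fin 3) : Set (Matrix.orthogonalGroup (Fin 3) ℝ) :=
  {g | ∃ A, Aᵀ * A = 1 ∧ (g : Matrix (Fin 3) (Fin 3) ℝ) = blockEmbed i j A}

def rotG (i j : Fin 3) (hij : i < j) (x y : ℝ) (h : x^2 + y^2 = 1) :
    Matrix.orthogonalGroup (Fin 3) ℝ :=
  ⟨blockEmbed i j !![x, -y; y, x], rot_mem i j hij x y h⟩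

lemma rotG_mem_S (i j : Fin 3) (hij : i < j) (x y : ℝ) (h : x^2 + y^2 = 1) :
    rotG i j hij x y h ∈ S i j :=
  ⟨!![x, -y; y, x], rot2_orth x y h, rfl⟩

lemma coe_orth (g : Matrix.orthogonalGroup (Fin 3) ℝ) :
    (↑g : Matrix (Fin 3) (Fin 3) ℝ)ᵀ * (↑g : Matrix (Fin 3) (Fin 3) ℝ) = 1 := by
  have := g.prop.1
  rwa [Matrix.star_eq_conjTranspose, Matrix.conjTranspose_eq_transpose_of_trivial] at this

lemma coe_orth' (g : Matrix.orthogonalGroup (Fin 3) ℝ) :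
    (↑g : Matrix (Fin 3) (Fin 3) ℝ) * (↑g : Matrix (Fin 3) (Fin 3) ℝ)ᵀ = 1 := by
  have := g.prop.2
  rwa [Matrix.star_eq_conjTranspose, Matrix.conjTranspose_eq_transpose_of_trivial] at this


/-- `SO(3)` as the subgroup of the orthogonal group `O(3)` of matrices of determinant one. -/
def SO3 : Subgroup (Matrix.orthogonalGroup (Fin 3) ℝ) where
  carrier := {g | Matrix.det (g : Matrix (Fin 3) (Fin 3) ℝ) = 1}
  one_mem' := by simp
  mul_mem' := by
    intro a b ha hb
    simp only [Set.mem_setOf_eq] at *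
    rw [Submonoid.coe_mul, Matrix.det_mul, ha, hb, mul_one]
  inv_mem' := by
    intro a ha
    simp only [Set.mem_setOf_eq] at *
    have h : ((a⁻¹ * a : Matrix.orthogonalGroup (Fin 3) ℝ) : Matrix (Fin 3) (Fin 3) ℝ) = 1 := by
      rw [inv_mul_cancel]; rfl
    rw [Submonoid.coe_mul] at h
    have := congrArg Matrix.det h
    rw [Matrix.det_mul, ha, mul_one, Matrix.det_one] at this
    exact this

lemma rotG_det (i j : Fin 3) (hij : i < j) (x y : ℝ) (h : x^2 + y^2 = 1) :
    (↑(rotG i j hij x y h) : Matrix (Fin 3) (Fin 3) ℝ).det = 1 := by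
  show (blockEmbed i j !![x, -y; y, x]).det = 1
  rw [blockEmbed_det i j hij, Matrix.det_fin_two_of]
  nlinarith [h]

lemma gen_01_02 : SO3 ≤ Subgroup.closure (S 0 1 ∪ S 0 2) := by
  intro g hg
  have hdet : (↑g : Matrix (Fin 3) (Fin 3) ℝ).det = 1 := hg
  have horthg := coe_orth g
  set G : Matrix (Fin 3) (Fin 3) ℝ := ↑g with hG
  have hv : G 0 2 ^ 2 + G 1 2 ^ 2 + G 2 2 ^ 2 = 1 := by
    have := congrFun (congrFun horthg 2) 2
    simp [Matrix.mul_apply, Fin.sum_univ_three, Matrix.one_apply] at this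
    nlinarith [this]
  set x : ℝ := G 2 2 with hx
  set s : ℝ := Real.sqrt (G 0 2 ^ 2 + G 1 2 ^ 2) with hsdef
  have hs2 : s ^ 2 = G 0 2 ^ 2 + G 1 2 ^ 2 := Real.sq_sqrt (by positivity)
  have hxs : x ^ 2 + s ^ 2 = 1 := by rw [hs2]; linarith [hv]
  obtain ⟨u, w, huw, hu, hw⟩ :
      ∃ u w : ℝ, u ^ 2 + w ^ 2 = 1 ∧ s * u = G 0 2 ∧ s * w = G 1 2 := by
    by_cases h0 : s = 0
    · have ha : G 0 2 = 0 := by nlinarith [hs2, sq_nonneg (G 1 2)]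
      have hb : G 1 2 = 0 := by nlinarith [hs2, sq_nonneg (G 0 2)]
      exact ⟨1, 0, by norm_num, by rw [h0, ha]; ring, by rw [h0, hb]; ring⟩
    · refine ⟨G 0 2 / s, G 1 2 / s, ?_, by field_simp; try ring, by field_simp; try ring⟩
      field_simp
      linarith [hs2]
  set h1 : Matrix.orthogonalGroup (Fin 3) ℝ := rotG 0 1 (by decide) u w huw with hh1
  set h2 : Matrix.orthogonalGroup (Fin 3) ℝ :=
    rotG 0 2 (by decide) x (-s) (by nlinarith [hxs]) with hh2
  set h : Matrix.orthogonalGroup (Fin 3) ℝ := h1 * h2 with hh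
  have hcol : ∀ t : Fin 3, (↑h : Matrix (Fin 3) (Fin 3) ℝ) t 2 = G t 2 := by
    intro t
    have hhc : (↑h : Matrix (Fin 3) (Fin 3) ℝ) =
        (↑h1 : Matrix (Fin 3) (Fin 3) ℝ) * (↑h2 : Matrix (Fin 3) (Fin 3) ℝ) := rfl
    rw [hhc]
    fin_cases t <;>
      simp [hh1, hh2, rotG, blockEmbed, Matrix.mul_apply, Fin.sum_univ_three,
        Matrix.det_fin_two_of] <;>
      first
        | linarith [hu, hw]
        | linear_combination (G 2 2) * huw
  set M : Matrix (Fin 3) (Fin 3) ℝ := (↑h : Matrix (Fin 3) (Fin 3) ℝ)ᵀ * G with hM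
  have hcancel : (↑h : Matrix (Fin 3) (Fin 3) ℝ) * M = G := by
    rw [hM, ← Matrix.mul_assoc, coe_orth' h, Matrix.one_mul]
  have hMorth : Mᵀ * M = 1 := by
    rw [hM, Matrix.transpose_mul, Matrix.transpose_transpose, Matrix.mul_assoc,
      ← Matrix.mul_assoc (↑h : Matrix (Fin 3) (Fin 3) ℝ), coe_orth' h, Matrix.one_mul, horthg]
  have hMdet : M.det = 1 := by
    have hdh : (↑h : Matrix (Fin 3) (Fin 3) ℝ).det = 1 := by
      have : (↑h : Matrix (Fin 3) (Fin 3) ℝ) =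
          (↑h1 : Matrix (Fin 3) (Fin 3) ℝ) * (↑h2 : Matrix (Fin 3) (Fin 3) ℝ) := rfl
      rw [this, Matrix.det_mul, hh1, hh2, rotG_det, rotG_det, mul_one]
    rw [hM, Matrix.det_mul, Matrix.det_transpose, hdh, hdet, mul_one]
  have hMcol : ∀ r : Fin 3, M r 2 = if r = 2 then 1 else 0 := by
    intro r
    have c1 : M r 2 =
        ((↑h : Matrix (Fin 3) (Fin 3) ℝ)ᵀ * (↑h : Matrix (Fin 3) (Fin 3) ℝ)) r 2 := by
      simp [hM, Matrix.mul_apply, Matrix.transpose_apply, hcol]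
    rw [c1, coe_orth h, Matrix.one_apply]
  obtain ⟨x', y', hxy', hMeq⟩ := fix2 M hMorth hMdet
    (by simpa using hMcol 0) (by simpa using hMcol 1) (by simpa using hMcol 2)
  have hMmem : M ∈ Matrix.orthogonalGroup (Fin 3) ℝ := by
    rw [Matrix.mem_orthogonalGroup_iff']
    exact hMorth
  have hgfact : g = h * ⟨M, hMmem⟩ := by
    apply Subtype.ext
    show G = (↑h : Matrix (Fin 3) (Fin 3) ℝ) * M
    rw [hcancel]
  rw [hgfact]
  refine Subgroup.mul_mem _ (Subgroup.mul_mem _ ?_ ?_) ?_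
  · exact Subgroup.subset_closure (Or.inl (rotG_mem_S 0 1 (by decide) u w huw))
  · exact Subgroup.subset_closure (Or.inr (rotG_mem_S 0 2 (by decide) x (-s) (by nlinarith [hxs])))
  · exact Subgroup.subset_closure (Or.inl ⟨!![x', -y'; y', x'], rot2_orth x' y' hxy', hMeq⟩)

lemma fix1 (m : Matrix (Fin 3) (Fin 3) ℝ) (horth : mᵀ * m = 1) (hdet : m.det = 1)
    (h0 : m 0 1 = 0) (h1 : m 2 1 = 0) (h2 : m 1 1 = 1) :
    ∃ x y : ℝ, x^2 + y^2 = 1 ∧ m = blockEmbed 0 2 !![x, -y; y, x] := by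
  have e : ∀ r s : Fin 3, m 0 r * m 0 s + m 1 r * m 1 s + m 2 r * m 2 s
      = if r = s then 1 else 0 := by
    intro r s
    have := congrFun (congrFun horth r) s
    simpa [Matrix.mul_apply, Fin.sum_univ_three, Matrix.one_apply, add_assoc] using this
  have e10 : m 1 0 = 0 := by have := e 1 0; simpa [h0, h1, h2] using this
  have e12 : m 1 2 = 0 := by have := e 1 2; simpa [h0, h1, h2] using this
  have e00 := e 0 0; have e02 := e 0 2; have e22 := e 2 2
  simp [h0, h1, h2, e10, e12] at e00 e02 e22
  rw [Matrix.det_fin_three] at hdet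
  simp [h0, h1, h2, e10, e12] at hdet
  refine ⟨m 0 0, m 2 0, by nlinarith [e00], ?_⟩
  have hd : m 2 2 = m 0 0 := by
    nlinarith [e00, e02, e22, hdet, sq_nonneg (m 2 2 - m 0 0), sq_nonneg (m 0 2 + m 2 0)]
  have hb : m 0 2 = -(m 2 0) := by
    nlinarith [e00, e02, e22, hdet, sq_nonneg (m 2 2 - m 0 0), sq_nonneg (m 0 2 + m 2 0)]
  ext r s
  fin_cases r <;> fin_cases s <;>
    simp [blockEmbed, Matrix.det_fin_two_of, h0, h1, h2, e10, e12, hd, hb] <;>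
    nlinarith [e00]

lemma gen_01_12 : SO3 ≤ Subgroup.closure (S 0 1 ∪ S 1 2) := by
  intro g hg
  have hdet : (↑g : Matrix (Fin 3) (Fin 3) ℝ).det = 1 := hg
  have horthg := coe_orth g
  set G : Matrix (Fin 3) (Fin 3) ℝ := ↑g with hG
  have hv : G 0 2 ^ 2 + G 1 2 ^ 2 + G 2 2 ^ 2 = 1 := by
    have := congrFun (congrFun horthg 2) 2
    simp [Matrix.mul_apply, Fin.sum_univ_three, Matrix.one_apply] at this
    nlinarith [this]
  set x : ℝ := G 2 2 with hx
  set s : ℝ := Real.sqrt (G 0 2 ^ 2 + G 1 2 ^ 2) with hsdef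
  have hs2 : s ^ 2 = G 0 2 ^ 2 + G 1 2 ^ 2 := Real.sq_sqrt (by positivity)
  have hxs : x ^ 2 + s ^ 2 = 1 := by rw [hs2]; linarith [hv]
  obtain ⟨u, w, huw, hu, hw⟩ :
      ∃ u w : ℝ, u ^ 2 + w ^ 2 = 1 ∧ s * u = G 1 2 ∧ s * w = -(G 0 2) := by
    by_cases h0 : s = 0
    · have ha : G 0 2 = 0 := by nlinarith [hs2, sq_nonneg (G 1 2)]
      have hb : G 1 2 = 0 := by nlinarith [hs2, sq_nonneg (G 0 2)]
      exact ⟨1, 0, by norm_num, by rw [h0, hb]; ring, by rw [h0, ha]; ring⟩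
    · refine ⟨G 1 2 / s, -(G 0 2) / s, ?_, by field_simp; try ring, by field_simp; try ring⟩
      field_simp
      linarith [hs2]
  set h1 : Matrix.orthogonalGroup (Fin 3) ℝ := rotG 0 1 (by decide) u w huw with hh1
  set h2 : Matrix.orthogonalGroup (Fin 3) ℝ :=
    rotG 1 2 (by decide) x (-s) (by nlinarith [hxs]) with hh2
  set h : Matrix.orthogonalGroup (Fin 3) ℝ := h1 * h2 with hh
  have hcol : ∀ t : Fin 3, (↑h : Matrix (Fin 3) (Fin 3) ℝ) t 2 = G t 2 := by
    intro t
    have hhc : (↑h : Matrix (Fin 3) (Fin 3) ℝ) =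
        (↑h1 : Matrix (Fin 3) (Fin 3) ℝ) * (↑h2 : Matrix (Fin 3) (Fin 3) ℝ) := rfl
    rw [hhc]
    fin_cases t <;>
      simp [hh1, hh2, rotG, blockEmbed, Matrix.mul_apply, Fin.sum_univ_three,
        Matrix.det_fin_two_of] <;>
      first
        | linarith [hu, hw]
        | linear_combination (G 2 2) * huw
  set M : Matrix (Fin 3) (Fin 3) ℝ := (↑h : Matrix (Fin 3) (Fin 3) ℝ)ᵀ * G with hM
  have hcancel : (↑h : Matrix (Fin 3) (Fin 3) ℝ) * M = G := by
    rw [hM, ← Matrix.mul_assoc, coe_orth' h, Matrix.one_mul]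
  have hMorth : Mᵀ * M = 1 := by
    rw [hM, Matrix.transpose_mul, Matrix.transpose_transpose, Matrix.mul_assoc,
      ← Matrix.mul_assoc (↑h : Matrix (Fin 3) (Fin 3) ℝ), coe_orth' h, Matrix.one_mul, horthg]
  have hMdet : M.det = 1 := by
    have hdh : (↑h : Matrix (Fin 3) (Fin 3) ℝ).det = 1 := by
      have : (↑h : Matrix (Fin 3) (Fin 3) ℝ) =
          (↑h1 : Matrix (Fin 3) (Fin 3) ℝ) * (↑h2 : Matrix (Fin 3) (Fin 3) ℝ) := rfl
      rw [this, Matrix.det_mul, hh1, hh2, rotG_det, rotG_det, mul_one]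
    rw [hM, Matrix.det_mul, Matrix.det_transpose, hdh, hdet, mul_one]
  have hMcol : ∀ r : Fin 3, M r 2 = if r = 2 then 1 else 0 := by
    intro r
    have c1 : M r 2 =
        ((↑h : Matrix (Fin 3) (Fin 3) ℝ)ᵀ * (↑h : Matrix (Fin 3) (Fin 3) ℝ)) r 2 := by
      simp [hM, Matrix.mul_apply, Matrix.transpose_apply, hcol]
    rw [c1, coe_orth h, Matrix.one_apply]
  obtain ⟨x', y', hxy', hMeq⟩ := fix2 M hMorth hMdet
    (by simpa using hMcol 0) (by simpa using hMcol 1) (by simpa using hMcol 2)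
  have hMmem : M ∈ Matrix.orthogonalGroup (Fin 3) ℝ := by
    rw [Matrix.mem_orthogonalGroup_iff']
    exact hMorth
  have hgfact : g = h * ⟨M, hMmem⟩ := by
    apply Subtype.ext
    show G = (↑h : Matrix (Fin 3) (Fin 3) ℝ) * M
    rw [hcancel]
  rw [hgfact]
  refine Subgroup.mul_mem _ (Subgroup.mul_mem _ ?_ ?_) ?_
  · exact Subgroup.subset_closure (Or.inl (rotG_mem_S 0 1 (by decide) u w huw))
  · exact Subgroup.subset_closure (Or.inr (rotG_mem_S 1 2 (by decide) x (-s) (by nlinarith [hxs])))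
  · exact Subgroup.subset_closure (Or.inl ⟨!![x', -y'; y', x'], rot2_orth x' y' hxy', hMeq⟩)

lemma gen_02_12 : SO3 ≤ Subgroup.closure (S 0 2 ∪ S 1 2) := by
  intro g hg
  have hdet : (↑g : Matrix (Fin 3) (Fin 3) ℝ).det = 1 := hg
  have horthg := coe_orth g
  set G : Matrix (Fin 3) (Fin 3) ℝ := ↑g with hG
  have hv : G 0 1 ^ 2 + G 1 1 ^ 2 + G 2 1 ^ 2 = 1 := by
    have := congrFun (congrFun horthg 1) 1
    simp [Matrix.mul_apply, Fin.sum_univ_three, Matrix.one_apply] at this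
    nlinarith [this]
  set x : ℝ := G 1 1 with hx
  set s : ℝ := Real.sqrt (G 0 1 ^ 2 + G 2 1 ^ 2) with hsdef
  have hs2 : s ^ 2 = G 0 1 ^ 2 + G 2 1 ^ 2 := Real.sq_sqrt (by positivity)
  have hxs : x ^ 2 + s ^ 2 = 1 := by rw [hs2]; linarith [hv]
  obtain ⟨u, w, huw, hu, hw⟩ :
      ∃ u w : ℝ, u ^ 2 + w ^ 2 = 1 ∧ s * u = G 2 1 ∧ s * w = -(G 0 1) := by
    by_cases h0 : s = 0
    · have ha : G 0 1 = 0 := by nlinarith [hs2, sq_nonneg (G 2 1)]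
      have hb : G 2 1 = 0 := by nlinarith [hs2, sq_nonneg (G 0 1)]
      exact ⟨1, 0, by norm_num, by rw [h0, hb]; ring, by rw [h0, ha]; ring⟩
    · refine ⟨G 2 1 / s, -(G 0 1) / s, ?_, by field_simp; try ring, by field_simp; try ring⟩
      field_simp
      linarith [hs2]
  set h1 : Matrix.orthogonalGroup (Fin 3) ℝ := rotG 0 2 (by decide) u w huw with hh1
  set h2 : Matrix.orthogonalGroup (Fin 3) ℝ :=
    rotG 1 2 (by decide) x s (by nlinarith [hxs]) with hh2
  set h : Matrix.orthogonalGroup (Fin 3) ℝ := h1 * h2 with hh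
  have hcol : ∀ t : Fin 3, (↑h : Matrix (Fin 3) (Fin 3) ℝ) t 1 = G t 1 := by
    intro t
    have hhc : (↑h : Matrix (Fin 3) (Fin 3) ℝ) =
        (↑h1 : Matrix (Fin 3) (Fin 3) ℝ) * (↑h2 : Matrix (Fin 3) (Fin 3) ℝ) := rfl
    rw [hhc]
    fin_cases t <;>
      simp [hh1, hh2, rotG, blockEmbed, Matrix.mul_apply, Fin.sum_univ_three,
        Matrix.det_fin_two_of] <;>
      first
        | linarith [hu, hw]
        | linear_combination (G 1 1) * huw
  set M : Matrix (Fin 3) (Fin 3) ℝ := (↑h : Matrix (Fin 3) (Fin 3) ℝ)ᵀ * G with hM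
  have hcancel : (↑h : Matrix (Fin 3) (Fin 3) ℝ) * M = G := by
    rw [hM, ← Matrix.mul_assoc, coe_orth' h, Matrix.one_mul]
  have hMorth : Mᵀ * M = 1 := by
    rw [hM, Matrix.transpose_mul, Matrix.transpose_transpose, Matrix.mul_assoc,
      ← Matrix.mul_assoc (↑h : Matrix (Fin 3) (Fin 3) ℝ), coe_orth' h, Matrix.one_mul, horthg]
  have hMdet : M.det = 1 := by
    have hdh : (↑h : Matrix (Fin 3) (Fin 3) ℝ).det = 1 := by
      have : (↑h : Matrix (Fin 3) (Fin 3) ℝ) =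
          (↑h1 : Matrix (Fin 3) (Fin 3) ℝ) * (↑h2 : Matrix (Fin 3) (Fin 3) ℝ) := rfl
      rw [this, Matrix.det_mul, hh1, hh2, rotG_det, rotG_det, mul_one]
    rw [hM, Matrix.det_mul, Matrix.det_transpose, hdh, hdet, mul_one]
  have hMcol : ∀ r : Fin 3, M r 1 = if r = 1 then 1 else 0 := by
    intro r
    have c1 : M r 1 =
        ((↑h : Matrix (Fin 3) (Fin 3) ℝ)ᵀ * (↑h : Matrix (Fin 3) (Fin 3) ℝ)) r 1 := by
      simp [hM, Matrix.mul_apply, Matrix.transpose_apply, hcol]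
    rw [c1, coe_orth h, Matrix.one_apply]
  obtain ⟨x', y', hxy', hMeq⟩ := fix1 M hMorth hMdet
    (by simpa using hMcol 0) (by simpa using hMcol 2) (by simpa using hMcol 1)
  have hMmem : M ∈ Matrix.orthogonalGroup (Fin 3) ℝ := by
    rw [Matrix.mem_orthogonalGroup_iff']
    exact hMorth
  have hgfact : g = h * ⟨M, hMmem⟩ := by
    apply Subtype.ext
    show G = (↑h : Matrix (Fin 3) (Fin 3) ℝ) * M
    rw [hcancel]
  rw [hgfact]
  refine Subgroup.mul_mem _ (Subgroup.mul_mem _ ?_ ?_) ?_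
  · exact Subgroup.subset_closure (Or.inl (rotG_mem_S 0 2 (by decide) u w huw))
  · exact Subgroup.subset_closure (Or.inr (rotG_mem_S 1 2 (by decide) x s (by nlinarith [hxs])))
  · exact Subgroup.subset_closure (Or.inl ⟨!![x', -y'; y', x'], rot2_orth x' y' hxy', hMeq⟩)

lemma closure_le_SO3 (i j i' j' : Fin 3) (hij : i < j) (hij' : i' < j') :
    Subgroup.closure (S i j ∪ S i' j') ≤ SO3 := by
  rw [Subgroup.closure_le]
  rintro g (⟨A, hA, hgA⟩ | ⟨A, hA, hgA⟩)
  · show (↑g : Matrix (Fin 3) (Fin 3) ℝ).det = 1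
    rw [hgA, blockEmbed_det i j hij, detA_sq hA]
  · show (↑g : Matrix (Fin 3) (Fin 3) ℝ).det = 1
    rw [hgA, blockEmbed_det i' j' hij', detA_sq hA]

/-- For any two distinct pairs `{i, j} ≠ {i', j'}`, the subgroup of `SO(3)` generated by the
images of the block embeddings `ι_{ij}, ι_{i'j'} : O(2) → SO(3)` is all of `SO(3)`. -/
theorem blockEmbed_images_generate_SO3 (i j i' j' : Fin 3) (hij : i < j) (hij' : i' < j')
    (hne : (i, j) ≠ (i', j')) :
    Subgroup.closure
        ({g : Matrix.orthogonalGroup (Fin 3) ℝ |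
            ∃ A, Aᵀ * A = 1 ∧ (g : Matrix (Fin 3) (Fin 3) ℝ) = blockEmbed i j A} ∪
          {g | ∃ A, Aᵀ * A = 1 ∧ (g : Matrix (Fin 3) (Fin 3) ℝ) = blockEmbed i' j' A}) =
      SO3 := by
  refine le_antisymm (closure_le_SO3 i j i' j' hij hij') ?_
  fin_cases i <;> fin_cases j <;> fin_cases i' <;> fin_cases j' <;>
    first
      | exact absurd hij (by decide)
      | exact absurd hij' (by decide)
      | exact absurd rfl hne
      | exact gen_01_02
      | exact gen_01_12
      | exact gen_02_12
      | (rw [Set.union_comm]; exact gen_01_02)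
      | (rw [Set.union_comm]; exact gen_01_12)
      | (rw [Set.union_comm]; exact gen_02_12)
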